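/- Let p be a prime and let C be a ring of characteristic p. Suppose x_1,…,x_n ∈ C and ∂_1,…,∂_n are derivations of C satisfying ∂_i(x_j) = δ_{ij}, [∂_i,∂_j] = ∂_i∘∂_j − ∂_j∘∂_i = 0, and ∂_i^p = 0 (p-fold composition) for all i,j ∈ {1,…,n}. Let A := ∩_{i=1}^n ker(∂_i). Then A ⊆ C has exponent one, x_1,…,x_n is a p-basis for C over A, the ∂_i are the partial derivatives associated to this p-basis, and ∂_1,…,∂_n form a basis of Der_A(C) as a C-module. -/

import Mathlib

open scoped TensorProduct

universe u

namespace PIPaper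

/-! ### Exponent, `C^{[e]}`, F-extensions -/

section Exponent

variable (p : ℕ) (R S : Type u) [CommRing R] [CommRing S] [Algebra R S]

/-- Every element of `S` has `p^e`-th power in (the image of) `R`. -/
def HasExpLE (e : ℕ) : Prop :=
  ∀ x : S, x ^ p ^ e ∈ (algebraMap R S).range

/-- The extension `R ⊆ S` has finite exponent. -/
def HasFinExp : Prop := ∃ e, HasExpLE p R S e

/-- `exp(S/R)`, the least exponent of the extension. -/
noncomputable def ringExp : ℕ := sInf {e | HasExpLE p R S e}

/-- `S^{[e]} = R[S^{p^e}]`, the `R`-subalgebra of `S` generated by all `p^e`-th powers. -/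
def subalgPow (e : ℕ) : Subalgebra R S :=
  Algebra.adjoin R (Set.range fun x : S => x ^ p ^ e)

/-- `R ⊆ S` is an `𝓕`-extension: finite, of finite exponent, and `S` is projective
over `S^{[e]} = R[S^{p^e}]` for every `e`. -/
def IsFExt : Prop :=
  Module.Finite R S ∧ HasFinExp p R S ∧
    ∀ e : ℕ, Module.Projective (subalgPow p R S e) S

lemma subalgPow_succ_le (e : ℕ) : subalgPow p R S (e + 1) ≤ subalgPow p R S e := by
  apply Algebra.adjoin_le
  rintro _ ⟨x, rfl⟩
  have hx : x ^ p ^ (e + 1) = (x ^ p) ^ p ^ e := by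
    rw [← pow_mul, ← pow_succ']
  show x ^ p ^ (e + 1) ∈ subalgPow p R S e
  rw [hx]
  exact Algebra.subset_adjoin ⟨x ^ p, rfl⟩

end Exponent

/-! ### Purely inseparable extensions -/

section PI

variable (p : ℕ) (R S : Type u) [CommRing R] [CommRing S] [Algebra R S]

/-- The model algebra `A'[X_1,…,X_n]/⟨X_1^{p^{e_1}},…,X_n^{p^{e_n}}⟩`. -/
abbrev truncModel (n : ℕ) (ee : Fin n → ℕ) (A' : Type u) [CommRing A'] : Type u :=
  MvPolynomial (Fin n) A' ⧸
    Ideal.span (Set.range fun i : Fin n =>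
      (MvPolynomial.X i : MvPolynomial (Fin n) A') ^ p ^ ee i)

/-- A witness that, after a faithfully flat base change `A_𝔭 → A'`, the extension
`C_𝔭 ⊗_{A_𝔭} A' = A' ⊗_A C` becomes a truncated polynomial algebra
`A'[X_1,…,X_n]/⟨X_i^{p^{e_i}}⟩` with all `e_i > 0`. -/
structure PISplitting (𝔭 : Ideal R) [𝔭.IsPrime] : Type (u + 1) where
  A' : Type u
  [commRingA' : CommRing A']
  [algLoc : Algebra (Localization.AtPrime 𝔭) A']
  [algR : Algebra R A']
  tower : IsScalarTower R (Localization.AtPrime 𝔭) A'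
  faithfullyFlat : Module.FaithfullyFlat (Localization.AtPrime 𝔭) A'
  n : ℕ
  ee : Fin n → ℕ
  ee_pos : ∀ i, 0 < ee i
  equiv : (A' ⊗[R] S) ≃ₐ[A'] truncModel p n ee A'

/-- `R ⊆ S` is a purely inseparable (ring) extension. -/
def IsPurelyInsep : Prop :=
  HasFinExp p R S ∧ Module.Finite R S ∧ Module.Projective R S ∧
    ∀ (𝔭 : Ideal R) [𝔭.IsPrime], Nonempty (PISplitting p R S 𝔭)

/-- `R ⊆ S` is a purely inseparable extension of exponent one, i.e. the faithfully
flat base changes can be taken of the form `A'[X_1,…,X_n]/⟨X_1^p,…,X_n^p⟩`. -/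
def IsPurelyInsep1 : Prop :=
  HasExpLE p R S 1 ∧ Module.Finite R S ∧ Module.Projective R S ∧
    ∀ (𝔭 : Ideal R) [𝔭.IsPrime], ∃ sp : PISplitting p R S 𝔭, ∀ i, sp.ee i = 1

/-- `x_1,…,x_n` is a `p`-basis of `S` over `R`: the reduced monomials
`x_1^{α_1} ⋯ x_n^{α_n}` with `0 ≤ α_i < p` form a basis of `S` as an `R`-module. -/
def IsPBasis {n : ℕ} (x : Fin n → S) : Prop :=
  LinearIndependent R (fun α : Fin n → Fin p => ∏ i, x i ^ (α i : ℕ)) ∧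
    Submodule.span R (Set.range fun α : Fin n → Fin p => ∏ i, x i ^ (α i : ℕ)) = ⊤

/-- `R ⊆ S` is a Galois extension of exponent one: finite, of exponent one, `S`
projective over `R`, and each localization at a prime of `R` admits a `p`-basis. -/
def IsGalois1 : Prop :=
  Module.Finite R S ∧ HasExpLE p R S 1 ∧ Module.Projective R S ∧
    ∀ (𝔭 : Ideal R) [𝔭.IsPrime],
      ∃ (n : ℕ) (x : Fin n → Localization.AtPrime 𝔭 ⊗[R] S),
        IsPBasis p (Localization.AtPrime 𝔭) (Localization.AtPrime 𝔭 ⊗[R] S) x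

/-- The extension `T₁ ⊆ T₂` of subalgebras of `S` is Galois of exponent one. -/
def IsGalois1Between (T₁ T₂ : Subalgebra R S) (h : T₁ ≤ T₂) : Prop :=
  letI : Algebra T₁ T₂ := (Subalgebra.inclusion h).toRingHom.toAlgebra
  IsGalois1 p T₁ T₂

end PI

/-! ### Principal parts and differential operators -/

/-- The module of principal parts `P^k_{S/R} = (S ⊗[R] S) / J^{k+1}`, a left `S`-module. -/
abbrev prinParts (R S : Type u) [CommRing R] [CommRing S] [Algebra R S] (k : ℕ) : Type u :=
  (S ⊗[R] S) ⧸ (KaehlerDifferential.ideal R S ^ (k + 1))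

section Diff

variable (R S M : Type u) [CommRing R] [CommRing S] [Algebra R S]
  [AddCommGroup M] [Module R M] [Module S M] [IsScalarTower R S M]

/-- `[x, D] : c ↦ x • D c - D (x * c)`. -/
def opBracket (x : S) (D : S →ₗ[R] M) : S →ₗ[R] M :=
  x • D - D ∘ₗ LinearMap.mulLeft R x

/-- `D : S → M` is an `R`-differential operator of order at most `n`:
all `(n+1)`-fold iterated brackets `[x_0,[x_1,…,[x_n, D]…]]` vanish. -/
def IsDiffOpLE (n : ℕ) (D : S →ₗ[R] M) : Prop :=
  ∀ xs : List S, xs.length = n + 1 → xs.foldr (opBracket R S M) D = 0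

end Diff

/-- `Diff_R^n(S)` is a direct summand of `End_R(S)` as a left `S`-module:
there is an `S`-linear projection of `End_R(S)` onto the submodule of
differential operators of order at most `n`. -/
def DiffSummand (R S : Type u) [CommRing R] [CommRing S] [Algebra R S] (n : ℕ) : Prop :=
  ∃ π : (S →ₗ[R] S) →ₗ[S] (S →ₗ[R] S),
    (∀ D, IsDiffOpLE R S S n (π D)) ∧ ∀ D, IsDiffOpLE R S S n D → π D = D

/-- `D` is an `R`-derivation of `S` (as an `R`-linear endomorphism). -/
def IsLinearDerivation (R S : Type u) [CommRing R] [CommRing S] [Algebra R S]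
    (D : S →ₗ[R] S) : Prop :=
  ∀ x y : S, D (x * y) = x * D y + y * D x

/-- `Der_R(S)` is a direct summand of `End_R(S)` as a left `S`-module. -/
def DerSummand (R S : Type u) [CommRing R] [CommRing S] [Algebra R S] : Prop :=
  ∃ π : (S →ₗ[R] S) →ₗ[S] (S →ₗ[R] S),
    (∀ D, IsLinearDerivation R S (π D)) ∧ ∀ D, IsLinearDerivation R S D → π D = D

/-! ### Jacobson–Bourbaki -/

section JB

variable (A C : Type u) [CommRing A] [CommRing C] [Algebra A C]

/-- `End_B(C)` as an `A`-subalgebra of `End_A(C)`, for an intermediate ring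
`A ⊆ B ⊆ C`. -/
def endOver (B : Subalgebra A C) : Subalgebra A (Module.End A C) where
  carrier := {φ : Module.End A C | ∀ b ∈ B, ∀ x : C, φ (b * x) = b * φ x}
  mul_mem' := by
    intro φ ψ hφ hψ b hb x
    show φ (ψ (b * x)) = b * φ (ψ x)
    rw [hψ b hb x]
    exact hφ b hb (ψ x)
  one_mem' := by intro b hb x; rfl
  add_mem' := by
    intro φ ψ hφ hψ b hb x
    show φ (b * x) + ψ (b * x) = b * (φ x + ψ x)
    rw [hφ b hb x, hψ b hb x, mul_add]
  zero_mem' := by intro b hb x; simp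
  algebraMap_mem' := by
    intro a b hb x
    show algebraMap A (Module.End A C) a (b * x) = b * (algebraMap A (Module.End A C) a x)
    rw [Module.algebraMap_end_apply, Module.algebraMap_end_apply, mul_smul_comm]

/-- `B_H := {x ∈ C : φ (x * c) = x * φ c for all φ ∈ H, c ∈ C}`. -/
def fixedSubalg (H : Subalgebra A (Module.End A C)) : Subalgebra A C where
  carrier := {c : C | ∀ φ ∈ H, ∀ x : C, φ (c * x) = c * φ x}
  mul_mem' := by
    intro a b ha hb φ hφ x
    show φ (a * b * x) = a * b * φ x
    rw [mul_assoc, ha φ hφ (b * x), hb φ hφ x, mul_assoc]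
  one_mem' := by intro φ hφ x; simp
  add_mem' := by
    intro a b ha hb φ hφ x
    show φ ((a + b) * x) = (a + b) * φ x
    rw [add_mul, map_add, ha φ hφ x, hb φ hφ x, add_mul]
  zero_mem' := by intro φ hφ x; simp
  algebraMap_mem' := by
    intro a φ hφ x
    show φ (algebraMap A C a * x) = algebraMap A C a * φ x
    rw [← Algebra.smul_def, map_smul, Algebra.smul_def]

/-- `H` is a `C`-submodule of `End_A(C)` which is a direct summand as a left
`C`-module: `H` is stable under the `C`-action and there is a `C`-linear
projection of `End_A(C)` onto `H`. -/
def IsCSummand (H : Subalgebra A (Module.End A C)) : Prop :=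
  (∀ (c : C) (φ : Module.End A C), φ ∈ H → c • φ ∈ H) ∧
  ∃ π : Module.End A C →ₗ[C] Module.End A C,
    (∀ D, π D ∈ H) ∧ ∀ D ∈ H, π D = D

end JB

/-! ### Kernel of a family of derivations -/

/-- The common kernel `∩ ker ∂_i` of a family of derivations, as a subring
(`ℤ`-subalgebra) of `C`. -/
def kerDer (C : Type u) [CommRing C] {n : ℕ} (d : Fin n → Derivation ℤ C C) :
    Subalgebra ℤ C where
  carrier := {c : C | ∀ i, d i c = 0}
  mul_mem' := by
    intro a b ha hb i
    rw [Derivation.leibniz, ha i, hb i, smul_zero, smul_zero, add_zero]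
  one_mem' := by intro i; simp
  add_mem' := by intro a b ha hb i; rw [map_add, ha i, hb i, add_zero]
  algebraMap_mem' := by intro m i; simp

/-- Truncated-polynomial generator `x_i`, the class of `X_i`. -/
noncomputable def truncX (p : ℕ) (n : ℕ) (ee : Fin n → ℕ) (A' : Type u) [CommRing A'] (i : Fin n) :
    truncModel p n ee A' :=
  Ideal.Quotient.mk _ (MvPolynomial.X i)

/-- The monomial `x^β = x_1^{β_1} ⋯ x_n^{β_n}` in the truncated polynomial algebra. -/
noncomputable def truncMon (p : ℕ) (n : ℕ) (ee : Fin n → ℕ) (A' : Type u) [CommRing A']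
    (β : Fin n → ℕ) : truncModel p n ee A' :=
  ∏ j, truncX p n ee A' j ^ β j

section Aux17

open Finset
variable {C : Type u} [CommRing C] {n : ℕ}

/-- pull a `d i`-constant out of an iterated derivative -/
lemma pull (d : Fin n → Derivation ℤ C C) (i : Fin n) {u : C} (hu : d i u = 0) (k : ℕ) (v : C) :
    ((d i).toLinearMap ^ k) (u * v) = u * ((d i).toLinearMap ^ k) v := by
  induction k generalizing v with
  | zero => simp
  | succ k ih =>
    have h1 : ((d i).toLinearMap ^ (k+1)) (u * v) = ((d i).toLinearMap ^ k) (d i (u * v)) := by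
      rw [pow_succ]; rfl
    have h2 : ((d i).toLinearMap ^ (k+1)) v = ((d i).toLinearMap ^ k) (d i v) := by
      rw [pow_succ]; rfl
    rw [h1, h2, Derivation.leibniz, hu, smul_zero, add_zero, smul_eq_mul, ih]

lemma dnat (d : Fin n → Derivation ℤ C C) (i : Fin n) (m : ℕ) : d i ((m : ℕ) : C) = 0 := by simp

lemma dcomm (d : Fin n → Derivation ℤ C C)
    (hcomm : ∀ i j (c : C), d i (d j c) = d j (d i c)) (i j : Fin n) (k : ℕ) (c : C) :
    d j (((d i).toLinearMap ^ k) c) = ((d i).toLinearMap ^ k) (d j c) := by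
  induction k generalizing c with
  | zero => simp
  | succ k ih =>
    have h1 : ((d i).toLinearMap ^ (k+1)) c = ((d i).toLinearMap ^ k) (d i c) := by
      rw [pow_succ]; rfl
    have h2 : ((d i).toLinearMap ^ (k+1)) (d j c) = ((d i).toLinearMap ^ k) (d i (d j c)) := by
      rw [pow_succ]; rfl
    rw [h1, h2, ih, hcomm i j c]

lemma descx (d : Fin n → Derivation ℤ C C) (i : Fin n) {y : C} (hy : d i y = 1) (k m : ℕ) :
    ((d i).toLinearMap ^ k) (y ^ m) = ((m.descFactorial k : ℕ) : C) * y ^ (m - k) := by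
  induction k with
  | zero => simp
  | succ k ih =>
    have h1 : ((d i).toLinearMap ^ (k+1)) (y ^ m) = d i (((d i).toLinearMap ^ k) (y ^ m)) := by
      rw [pow_succ']; rfl
    rw [h1, ih, Derivation.leibniz, dnat, smul_zero, add_zero, smul_eq_mul,
      Derivation.leibniz_pow, hy, smul_eq_mul, mul_one, Nat.descFactorial_succ]
    simp only [nsmul_eq_mul, Nat.sub_sub]
    push_cast
    ring

lemma dpow_ne (d : Fin n → Derivation ℤ C C) (i : Fin n) {y : C} (hy : d i y = 0) (m : ℕ) :
    d i (y ^ m) = 0 := by rw [Derivation.leibniz_pow, hy]; simp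

lemma dprod_zero (d : Fin n → Derivation ℤ C C) (i : Fin n) (s : Finset (Fin n)) (f : Fin n → C)
    (h : ∀ j ∈ s, d i (f j) = 0) : d i (∏ j ∈ s, f j) = 0 := by
  refine Finset.prod_induction f (fun c => d i c = 0) ?_ (by simp) h
  intro a b ha hb
  rw [Derivation.leibniz, ha, hb, smul_zero, smul_zero, add_zero]

lemma monD (x : Fin n → C) (d : Fin n → Derivation ℤ C C)
    (hdx : ∀ i j, d i (x j) = if i = j then 1 else 0) (i : Fin n) (k : ℕ) (β : Fin n → ℕ) :
    ((d i).toLinearMap ^ k) (∏ j, x j ^ β j) =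
      (((β i).descFactorial k : ℕ) : C) * ∏ j, x j ^ (β j - if j = i then k else 0) := by
  have hker : d i (∏ j ∈ univ.erase i, x j ^ β j) = 0 := by
    refine dprod_zero d i _ _ (fun j hj => ?_)
    exact dpow_ne d i (by rw [hdx]; simp [(Finset.mem_erase.mp hj).1.symm]) _
  have hsplit : (∏ j, x j ^ β j) = (∏ j ∈ univ.erase i, x j ^ β j) * x i ^ β i :=
    (Finset.prod_erase_mul _ _ (mem_univ i)).symm
  have hsplit2 : (∏ j, x j ^ (β j - if j = i then k else 0)) =
      (∏ j ∈ univ.erase i, x j ^ β j) * x i ^ (β i - k) := by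
    rw [← Finset.prod_erase_mul _ _ (mem_univ i)]
    simp only [if_pos rfl]
    congr 1
    refine Finset.prod_congr rfl (fun j hj => ?_)
    rw [if_neg (Finset.mem_erase.mp hj).1, Nat.sub_zero]
  rw [hsplit, pull d i hker, descx d i (by rw [hdx]; simp), hsplit2]
  ring

/-- ordered product of iterated derivatives along a list -/
def PopL (d : Fin n → Derivation ℤ C C) (l : List (Fin n)) (γ : Fin n → ℕ) : Module.End ℤ C :=
  l.foldr (fun i acc => (d i).toLinearMap ^ γ i * acc) 1

@[simp] lemma PopL_nil (d : Fin n → Derivation ℤ C C) (γ : Fin n → ℕ) : PopL d [] γ = 1 := rfl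

@[simp] lemma PopL_cons (d : Fin n → Derivation ℤ C C) (i : Fin n) (t : List (Fin n))
    (γ : Fin n → ℕ) : PopL d (i :: t) γ = (d i).toLinearMap ^ γ i * PopL d t γ := rfl

lemma PopL_pull (d : Fin n → Derivation ℤ C C) (l : List (Fin n)) (γ : Fin n → ℕ)
    {u : C} (hu : ∀ i, d i u = 0) (v : C) :
    PopL d l γ (u * v) = u * PopL d l γ v := by
  induction l with
  | nil => simp
  | cons i t ih =>
    rw [PopL_cons, Module.End.mul_apply, Module.End.mul_apply, ih, pull d i (hu i)]

lemma Pmon (x : Fin n → C) (d : Fin n → Derivation ℤ C C)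
    (hdx : ∀ i j, d i (x j) = if i = j then 1 else 0) (l : List (Fin n)) (hl : l.Nodup)
    (γ β : Fin n → ℕ) :
    PopL d l γ (∏ j, x j ^ β j) =
      (((l.map fun i => (β i).descFactorial (γ i)).prod : ℕ) : C) *
        ∏ j, x j ^ (β j - if j ∈ l then γ j else 0) := by
  induction l with
  | nil => simp
  | cons i t ih =>
    obtain ⟨hit, htnd⟩ := List.nodup_cons.mp hl
    rw [PopL_cons, Module.End.mul_apply, ih htnd,
      pull d i (by exact dnat d i _),
      monD x d hdx i (γ i) (fun j => β j - if j ∈ t then γ j else 0)]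
    have he : (β i - if i ∈ t then γ i else 0) = β i := by rw [if_neg hit, Nat.sub_zero]
    have hprod : (∏ j, x j ^ ((β j - if j ∈ t then γ j else 0) - if j = i then γ i else 0)) =
        ∏ j, x j ^ (β j - if j ∈ (i :: t) then γ j else 0) := by
      refine Finset.prod_congr rfl (fun j _ => ?_)
      by_cases hj : j = i
      · subst hj
        rw [if_pos rfl, if_neg hit, Nat.sub_zero, if_pos ((List.mem_cons_self (a := j) (l := t)))]
      · simp [List.mem_cons, hj]
    rw [he, hprod, List.map_cons, List.prod_cons]
    push_cast
    ring
lemma subalg_smul (S : Subalgebra ℤ C) (a : ↥S) (c : C) : a • c = ↑a * c := by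
  rw [Algebra.smul_def]; rfl

lemma spanTop (p : ℕ) (hp : p.Prime) [CharP C p] (x : Fin n → C)
    (d : Fin n → Derivation ℤ C C)
    (hdx : ∀ i j, d i (x j) = if i = j then 1 else 0)
    (hcomm : ∀ i j (c : C), d i (d j c) = d j (d i c))
    (hpow : ∀ i (c : C), (⇑(d i))^[p] c = 0) :
    Submodule.span ↥(kerDer C d) (Set.range fun α : Fin n → Fin p => ∏ i, x i ^ (α i : ℕ)) = ⊤ := by
  haveI := Fact.mk hp
  have key : ∀ l : List (Fin n), l.Nodup → ∀ c : C, (∀ j, j ∉ l → d j c = 0) →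
      c ∈ Submodule.span ↥(kerDer C d)
        (Set.range fun α : Fin n → Fin p => ∏ j, x j ^ (if j ∈ l then (α j : ℕ) else 0)) := by
    intro l
    induction l with
    | nil =>
      intro _ c hc
      have hcA : c ∈ kerDer C d := fun i => hc i (by simp)
      have h1 : c = (⟨c, hcA⟩ : ↥(kerDer C d)) •
          (∏ j, x j ^ (if j ∈ ([] : List (Fin n))
            then (((fun _ => (⟨0, hp.pos⟩ : Fin p)) j : Fin p) : ℕ) else 0)) := by
        simp [subalg_smul]
      rw [h1]
      exact Submodule.smul_mem _ _ (Submodule.subset_span ⟨_, rfl⟩)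
    | cons i t ih =>
      intro hnd
      obtain ⟨hit, htnd⟩ := List.nodup_cons.mp hnd
      have hdxi : d i (x i) = 1 := by rw [hdx]; simp
      have inner : ∀ r : ℕ, r ≤ p → ∀ c : C, (∀ j, j ∉ (i :: t) → d j c = 0) →
          ((d i).toLinearMap ^ r) c = 0 →
          c ∈ Submodule.span ↥(kerDer C d)
            (Set.range fun α : Fin n → Fin p =>
              ∏ j, x j ^ (if j ∈ (i :: t) then (α j : ℕ) else 0)) := by
        intro r
        induction r with
        | zero =>
          intro _ c _ h0
          simp only [pow_zero, Module.End.one_apply] at h0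
          rw [h0]; exact Submodule.zero_mem _
        | succ r ihr =>
          intro hrp c hc hr
          have hrlt : r < p := hrp
          set κ := ZMod.castHom (dvd_refl p) C with hκ
          have dκ : ∀ (j : Fin n) (z : ZMod p), d j (κ z) = 0 := by
            intro j z
            obtain ⟨m, rfl⟩ : ∃ m : ℕ, ((m : ZMod p)) = z := ⟨z.val, ZMod.natCast_rightInverse z⟩
            rw [map_natCast]; simp
          set u : C := κ ((r.factorial : ZMod p)⁻¹) with hu
          set a : C := u * ((d i).toLinearMap ^ r) c with ha
          have hfact : ((r.factorial : ZMod p)) ≠ 0 := by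
            rw [Ne, ZMod.natCast_eq_zero_iff, hp.dvd_factorial]
            omega
          have hur : u * ((r.factorial : ℕ) : C) = 1 := by
            have h5 : ((r.factorial : ℕ) : C) = κ ((r.factorial : ZMod p)) := (map_natCast κ _).symm
            rw [h5, hu, ← map_mul, inv_mul_cancel₀ hfact, map_one]
          have hsucc' : ∀ w : C, ((d i).toLinearMap ^ (r+1)) w = d i (((d i).toLinearMap ^ r) w) := by
            intro w; rw [pow_succ']; rfl
          have hda : ∀ j, j ∉ t → d j a = 0 := by
            intro j hj
            by_cases hji : j = i
            · subst hji
              rw [ha, Derivation.leibniz, dκ, smul_zero, add_zero, smul_eq_mul,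
                ← hsucc' c, hr, mul_zero]
            · have hjc : d j c = 0 := hc j (by
                intro hmem
                rcases List.mem_cons.mp hmem with h | h
                · exact hji h
                · exact hj h)
              rw [ha, Derivation.leibniz, dκ, smul_zero, add_zero, smul_eq_mul,
                dcomm d hcomm i j r c, hjc, map_zero, mul_zero]
          have haT := ih htnd a hda
          have hdkmul : ((d i).toLinearMap ^ r) (x i ^ r * a) = ((d i).toLinearMap ^ r) c := by
            rw [mul_comm, pull d i (hda i hit) r, descx d i hdxi r r,
              Nat.sub_self, pow_zero, mul_one, Nat.descFactorial_self]
            calc a * ((r.factorial : ℕ) : C)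
                = ((d i).toLinearMap ^ r) c * (u * ((r.factorial : ℕ) : C)) := by
                  rw [ha]; ring
              _ = ((d i).toLinearMap ^ r) c := by rw [hur, mul_one]
          have hc' : ∀ j, j ∉ (i :: t) → d j (c - x i ^ r * a) = 0 := by
            intro j hj
            have hji : j ≠ i := fun h => hj (h ▸ (List.mem_cons_self (a := i) (l := t)))
            have hjt : j ∉ t := fun h => hj (List.mem_cons_of_mem _ h)
            have hzero : d j (x i ^ r * a) = 0 := by
              rw [Derivation.leibniz, hda j hjt, smul_zero,
                dpow_ne d j (by rw [hdx]; simp [hji]) r, smul_zero, add_zero]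
            rw [map_sub, hc j hj, hzero, sub_zero]
          have hr' : ((d i).toLinearMap ^ r) (c - x i ^ r * a) = 0 := by
            rw [map_sub, hdkmul, sub_self]
          have hc'T := ihr (Nat.le_of_succ_le hrp) _ hc' hr'
          have hxa : x i ^ r * a ∈ Submodule.span ↥(kerDer C d)
              (Set.range fun α : Fin n → Fin p =>
                ∏ j, x j ^ (if j ∈ (i :: t) then (α j : ℕ) else 0)) := by
            have hmem : x i ^ r * a ∈ Submodule.map
                (LinearMap.mulLeft ↥(kerDer C d) (x i ^ r))
                (Submodule.span ↥(kerDer C d) (Set.range fun α : Fin n → Fin p =>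
                  ∏ j, x j ^ (if j ∈ t then (α j : ℕ) else 0))) := ⟨a, haT, rfl⟩
            rw [Submodule.map_span] at hmem
            have himg : (LinearMap.mulLeft ↥(kerDer C d) (x i ^ r)) ''
                (Set.range fun α : Fin n → Fin p =>
                  ∏ j, x j ^ (if j ∈ t then (α j : ℕ) else 0)) ⊆
                (Set.range fun α : Fin n → Fin p =>
                  ∏ j, x j ^ (if j ∈ (i :: t) then (α j : ℕ) else 0)) := by
              rintro - ⟨-, ⟨α, rfl⟩, rfl⟩
              refine ⟨Function.update α i ⟨r, hrlt⟩, ?_⟩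
              show (∏ j, x j ^ (if j ∈ (i :: t)
                  then ((Function.update α i ⟨r, hrlt⟩ j : Fin p) : ℕ) else 0)) =
                LinearMap.mulLeft ↥(kerDer C d) (x i ^ r)
                  (∏ j, x j ^ (if j ∈ t then (α j : ℕ) else 0))
              rw [LinearMap.mulLeft_apply,
                ← Finset.prod_erase_mul _ _ (mem_univ i),
                ← Finset.prod_erase_mul _ _ (mem_univ i)]
              have h1 : (if i ∈ (i :: t)
                  then ((Function.update α i ⟨r, hrlt⟩ i : Fin p) : ℕ) else 0) = r := by
                rw [if_pos ((List.mem_cons_self (a := i) (l := t))), Function.update_self]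
              have h2 : (if i ∈ t then ((α i : Fin p) : ℕ) else 0) = 0 := by rw [if_neg hit]
              have h3 : ∀ j ∈ univ.erase i,
                  x j ^ (if j ∈ (i :: t)
                    then ((Function.update α i ⟨r, hrlt⟩ j : Fin p) : ℕ) else 0) =
                  x j ^ (if j ∈ t then ((α j : Fin p) : ℕ) else 0) := by
                intro j hj
                have hji := (Finset.mem_erase.mp hj).1
                rw [Function.update_of_ne hji]
                simp [List.mem_cons, hji]
              rw [Finset.prod_congr rfl h3, h1, h2, pow_zero, mul_one]
              ring
            exact Submodule.span_mono himg hmem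
          have hfin : c = (c - x i ^ r * a) + x i ^ r * a := by ring
          rw [hfin]
          exact Submodule.add_mem _ hc'T hxa
      intro c hc
      refine inner p le_rfl c hc ?_
      rw [Module.End.pow_apply]
      exact hpow i c
  rw [eq_top_iff]
  rintro c -
  have h := key (List.finRange n) (List.nodup_finRange n) c
    (fun j hj => absurd (List.mem_finRange j) hj)
  simpa using h

lemma linIndep (p : ℕ) (hp : p.Prime) [CharP C p] (x : Fin n → C)
    (d : Fin n → Derivation ℤ C C)
    (hdx : ∀ i j, d i (x j) = if i = j then 1 else 0) :
    LinearIndependent ↥(kerDer C d) (fun α : Fin n → Fin p => ∏ i, x i ^ (α i : ℕ)) := by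
  haveI := Fact.mk hp
  classical
  rw [Fintype.linearIndependent_iff]
  intro g hg
  by_contra hne
  push_neg at hne
  obtain ⟨γ₀, hγ₀⟩ := hne
  set S := Finset.univ.filter (fun α : Fin n → Fin p => g α ≠ 0) with hS
  obtain ⟨γ, hγS, hγmax⟩ := S.exists_max_image (fun α => ∑ i, (α i : ℕ))
    ⟨γ₀, by simp [hS, hγ₀]⟩
  have hγne : g γ ≠ 0 := (Finset.mem_filter.mp hγS).2
  set γn : Fin n → ℕ := fun i => (γ i : ℕ) with hγn
  have h0 : PopL d (List.finRange n) γn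
      (∑ α : Fin n → Fin p, g α • ∏ i, x i ^ (α i : ℕ)) = 0 := by
    rw [hg, map_zero]
  rw [map_sum] at h0
  have hterm : ∀ α : Fin n → Fin p,
      PopL d (List.finRange n) γn (g α • ∏ i, x i ^ (α i : ℕ)) =
      ↑(g α) * (((∏ i, ((α i : ℕ)).descFactorial (γ i : ℕ)) : ℕ) : C) *
        ∏ j, x j ^ ((α j : ℕ) - (γ j : ℕ)) := by
    intro α
    rw [subalg_smul, PopL_pull d _ _ (fun i => (g α).2 i),
      Pmon x d hdx _ (List.nodup_finRange n), ← Fin.prod_univ_def]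
    simp only [List.mem_finRange, if_true]
    ring
  have hvanish : ∀ α : Fin n → Fin p, α ∈ Finset.univ → α ≠ γ →
      PopL d (List.finRange n) γn (g α • ∏ i, x i ^ (α i : ℕ)) = 0 := by
    intro α _ hαγ
    rw [hterm]
    by_cases hgα : g α = 0
    · rw [hgα]; simp
    · by_cases hlt : ∃ i, (α i : ℕ) < (γ i : ℕ)
      · obtain ⟨i, hi⟩ := hlt
        have hz : (∏ i, ((α i : ℕ)).descFactorial (γ i : ℕ)) = 0 :=
          Finset.prod_eq_zero (mem_univ i) (Nat.descFactorial_eq_zero_iff_lt.mpr hi)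
        rw [hz]; simp
      · push_neg at hlt
        exfalso
        have hαS : α ∈ S := by simp [hS, hgα]
        have hle := hγmax α hαS
        have hex : ∃ i, (γ i : ℕ) < (α i : ℕ) := by
          by_contra hno; push_neg at hno
          exact hαγ (funext fun i => Fin.ext (le_antisymm (hno i) (hlt i)))
        obtain ⟨i, hi⟩ := hex
        have hsum : (∑ i, (γ i : ℕ)) < ∑ i, (α i : ℕ) :=
          Finset.sum_lt_sum (fun i _ => hlt i) ⟨i, mem_univ i, hi⟩
        simp only [hγn] at hle hsum
        omega
  rw [Finset.sum_eq_single_of_mem γ (mem_univ γ) hvanish, hterm] at h0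
  have h1 : (∏ i, ((γ i : ℕ)).descFactorial (γ i : ℕ)) = ∏ i, ((γ i : ℕ)).factorial :=
    Finset.prod_congr rfl fun i _ => Nat.descFactorial_self _
  have h2 : (∏ j, x j ^ ((γ j : ℕ) - (γ j : ℕ))) = 1 := by simp
  rw [h1, h2, mul_one] at h0
  have hfne : (((∏ i, ((γ i : ℕ)).factorial : ℕ)) : ZMod p) ≠ 0 := by
    rw [Nat.cast_prod]
    refine Finset.prod_ne_zero_iff.mpr fun i _ => ?_
    rw [Ne, ZMod.natCast_eq_zero_iff, hp.dvd_factorial]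
    exact not_le.mpr (γ i).isLt
  set κ := ZMod.castHom (dvd_refl p) C with hκ
  have hgz : (↑(g γ) : C) = 0 := by
    have hNc : (((∏ i, ((γ i : ℕ)).factorial : ℕ)) : C) =
        κ (((∏ i, ((γ i : ℕ)).factorial : ℕ)) : ZMod p) := (map_natCast κ _).symm
    calc (↑(g γ) : C)
        = ↑(g γ) * ((((∏ i, ((γ i : ℕ)).factorial : ℕ)) : C) *
            κ ((((∏ i, ((γ i : ℕ)).factorial : ℕ)) : ZMod p))⁻¹) := by
          rw [hNc, ← map_mul, mul_inv_cancel₀ hfne, map_one, mul_one]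
      _ = (↑(g γ) * (((∏ i, ((γ i : ℕ)).factorial : ℕ)) : C)) *
            κ ((((∏ i, ((γ i : ℕ)).factorial : ℕ)) : ZMod p))⁻¹ := by ring
      _ = 0 := by rw [h0, zero_mul]
  exact hγne (Subtype.ext hgz)


end Aux17

/-- Lemma 3.17, after Jacobson/Hochschild/Yuan: commuting derivations
`∂_i` with `∂_i^p = 0` and `∂_i x_j = δ_{ij}` make `x_1,…,x_n` a `p`-basis of `C` over
`A = ∩ ker ∂_i`, with the `∂_i` the associated partial derivatives, forming a `C`-basis
of `Der_A(C)`. -/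
theorem statement17 (p : ℕ) (hp : p.Prime) (C : Type u) [CommRing C] [CharP C p]
    (n : ℕ) (x : Fin n → C) (d : Fin n → Derivation ℤ C C)
    (hdx : ∀ i j, d i (x j) = if i = j then 1 else 0)
    (hcomm : ∀ i j (c : C), d i (d j c) = d j (d i c))
    (hpow : ∀ i (c : C), (⇑(d i))^[p] c = 0) :
    (∀ c : C, c ^ p ∈ kerDer C d) ∧
    IsPBasis p (kerDer C d) C x ∧
    (∀ i (α : Fin n → Fin p),
      d i (∏ j, x j ^ (α j : ℕ)) =
        (α i : ℕ) • ∏ j, x j ^ ((α j : ℕ) - if j = i then 1 else 0)) ∧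
    (∀ D : Derivation (kerDer C d) C C, ∃! c : Fin n → C,
      ∀ y : C, D y = ∑ i, c i * d i y) := by
  have hspan := spanTop p hp x d hdx hcomm hpow
  refine ⟨?_, ⟨linIndep p hp x d hdx, hspan⟩, ?_, ?_⟩
  · -- exponent one
    intro c i
    rw [Derivation.leibniz_pow, nsmul_eq_mul, CharP.cast_eq_zero C p, zero_mul]
  · -- partial derivatives
    intro i α
    have h := monD x d hdx i 1 (fun j => (α j : ℕ))
    rw [pow_one, Nat.descFactorial_one] at h
    rw [nsmul_eq_mul]
    exact h
  · -- derivation module basis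
    intro D
    have hDa : ∀ a : ↥(kerDer C d), D (↑a : C) = 0 := fun a => D.map_algebraMap a
    refine ⟨fun i => D (x i), ?_, ?_⟩
    · -- existence
      let E : Derivation ℤ C C :=
        { toLinearMap := D.toLinearMap.restrictScalars ℤ
          map_one_eq_zero' := D.map_one_eq_zero
          leibniz' := D.leibniz }
      have hE : ∀ y : C, E y = D y := fun y => rfl
      set Δ : Derivation ℤ C C := E - ∑ i, D (x i) • d i with hΔdef
      have hsum_apply : ∀ y : C, (∑ i, D (x i) • d i : Derivation ℤ C C) y
          = ∑ i, D (x i) * d i y := by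
        intro y
        induction (Finset.univ : Finset (Fin n)) using Finset.induction with
        | empty => simp
        | insert a s hni ih => simp_all [Finset.sum_insert hni]
      have hΔ : ∀ y : C, Δ y = D y - ∑ i, D (x i) * d i y := by
        intro y
        rw [hΔdef, Derivation.sub_apply, hE, hsum_apply]
      have hΔx : ∀ j, Δ (x j) = 0 := by
        intro j
        rw [hΔ]
        simp [hdx, mul_ite]
      have hΔA : ∀ a : ↥(kerDer C d), Δ (↑a : C) = 0 := by
        intro a
        rw [hΔ, hDa]
        have : ∀ i, d i (↑a : C) = 0 := a.2
        simp [this]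
      have hΔmon : ∀ α : Fin n → Fin p, Δ (∏ j, x j ^ (α j : ℕ)) = 0 := by
        intro α
        refine Finset.prod_induction _ (fun c => Δ c = 0) ?_ ?_ ?_
        · intro a b ha hb; rw [Derivation.leibniz, ha, hb, smul_zero, smul_zero, add_zero]
        · simp
        · intro j _
          rw [Derivation.leibniz_pow, hΔx, smul_zero, smul_zero]
      have hV : ∀ y : C, Δ y = 0 := by
        let V : Submodule ↥(kerDer C d) C :=
          { carrier := {y : C | Δ y = 0}
            add_mem' := fun ha hb => by
              simp only [Set.mem_setOf_eq] at *
              rw [map_add, ha, hb, add_zero]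
            zero_mem' := by simp
            smul_mem' := fun a y hy => by
              simp only [Set.mem_setOf_eq] at *
              rw [subalg_smul, Derivation.leibniz, hy, hΔA, smul_zero, smul_zero, add_zero] }
        intro y
        have : y ∈ V := by
          have hle : Submodule.span ↥(kerDer C d)
              (Set.range fun α : Fin n → Fin p => ∏ i, x i ^ (α i : ℕ)) ≤ V :=
            Submodule.span_le.mpr (by rintro - ⟨α, rfl⟩; exact hΔmon α)
          exact hle (hspan ▸ Submodule.mem_top)
        exact this
      intro y
      have := hV y
      rw [hΔ] at this
      exact sub_eq_zero.mp this
    · -- uniqueness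
      intro c' hc'
      funext j
      have h := hc' (x j)
      rw [h]
      simp [hdx, mul_ite]


end PIPaper
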